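/- Let d and k be positive integers with 2 ≤ d ≤ k, and let t₁ ≤ t₂ ≤ ⋯ ≤ t_d be integers with t₁ ≥ 2 and t₂ ≥ k−d+2. Then there exists n₀ such that for all n ≥ n₀ the following holds: for any pairwise disjoint subsets T₁, ..., T_d of [n] with |T_i| = t_i for all i, the family H = {F ⊆ [n] : |F| = k and F ∩ T_i ≠ ∅ for all i = 1, ..., d} has the property that every intersecting subfamily G ⊆ H satisfies |G| ≤ max_{x ∈ [n]} |{H ∈ H : x ∈ H}|. -/

import Mathlib

open Finset

namespace EKRAux

lemma mod_cancel_left {U x y v : ℕ} (hx : x < U) (hy : y < U)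
    (h : (U - v + x) % U = (U - v + y) % U) : x = y := by
  have h' : U - v + x ≡ U - v + y [MOD U] := h
  have := Nat.ModEq.add_left_cancel' (U - v) h'
  rwa [Nat.ModEq, Nat.mod_eq_of_lt hx, Nat.mod_eq_of_lt hy] at this

lemma mod_cancel_right {U x v w : ℕ} (hv : v < U) (hw : w < U)
    (h : (U - v + x) % U = (U - w + x) % U) : v = w := by
  have h' : U - v + x ≡ U - w + x [MOD U] := h
  have h2 := Nat.ModEq.add_right_cancel' x h'
  have h3 : (U - v) + (v + w) ≡ (U - w) + (v + w) [MOD U] := h2.add_right _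
  have e1 : (U - v) + (v + w) = U + w := by omega
  have e2 : (U - w) + (v + w) = U + v := by omega
  rw [e1, e2] at h3
  have h4 := Nat.ModEq.add_left_cancel' U h3
  rwa [Nat.ModEq, Nat.mod_eq_of_lt hv, Nat.mod_eq_of_lt hw, eq_comm] at h4

lemma mod_recover {U x v : ℕ} (hx : x < U) (hv : v < U) :
    ((U - v + x) % U + v) % U = x := by
  rw [Nat.mod_add_mod]
  have e : U - v + x + v = U + x := by omega
  rw [e, Nat.add_mod_left, Nat.mod_eq_of_lt hx]

variable {e : ℕ} {u : Fin e → ℕ} {z : Fin e}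

/-- the difference map -/
def dmap (u : Fin e → ℕ) (f : ∀ i, Fin (u i)) : ∀ i, Fin (u i) :=
  fun i => ⟨(u i - (f z).val + (f i).val) % u i,
    Nat.mod_lt _ (by
      have : 0 < u i := lt_of_le_of_lt (Nat.zero_le _) (f i).isLt
      exact this)⟩

lemma dmap_injOn (hz : 0 < u z) (hmin : ∀ i, u z ≤ u i)
    (F : Finset (∀ i, Fin (u i)))
    (hint : ∀ f ∈ F, ∀ g ∈ F, ∃ i, f i = g i) :
    Set.InjOn (dmap (z := z) u) F := by
  intro f hf g hg hfg
  have hcomp : ∀ i, (u i - (f z).val + (f i).val) % u i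
      = (u i - (g z).val + (g i).val) % u i := by
    intro i; exact congrArg Fin.val (congrFun hfg i)
  -- first: f z = g z
  have hzz : f z = g z := by
    obtain ⟨i0, hi0⟩ := hint f hf g hg
    by_cases hiz : i0 = z
    · rwa [hiz] at hi0
    · have h0 := hcomp i0
      rw [hi0] at h0
      have := mod_cancel_right (lt_of_lt_of_le (f z).isLt (hmin i0))
        (lt_of_lt_of_le (g z).isLt (hmin i0)) h0
      exact Fin.val_injective this
  funext i
  have h0 := hcomp i
  rw [hzz] at h0
  exact Fin.val_injective (mod_cancel_left (f i).isLt (g i).isLt h0)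

lemma dmap_mem (hz : 0 < u z) (hmin : ∀ i, u z ≤ u i) (f : ∀ i, Fin (u i)) :
    dmap (z := z) u f ∈ Fintype.piFinset
      (fun i => if i = z then ({⟨0, lt_of_lt_of_le hz (hmin i)⟩} : Finset (Fin (u i)))
        else Finset.univ) := by
  rw [Fintype.mem_piFinset]
  intro i
  by_cases hiz : i = z
  · subst hiz
    have h2 : dmap (z := i) u f i = ⟨0, lt_of_lt_of_le hz (hmin i)⟩ := by
      apply Fin.val_injective
      show (u i - (f i).val + (f i).val) % u i = 0
      have h3 : u i - (f i).val + (f i).val = u i := by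
        have := (f i).isLt; omega
      rw [h3, Nat.mod_self]
    rw [h2]
    simp
  · simp [if_neg hiz]

lemma target_card (hz : 0 < u z) (hmin : ∀ i, u z ≤ u i) :
    (Fintype.piFinset
      (fun i => if i = z then ({⟨0, lt_of_lt_of_le hz (hmin i)⟩} : Finset (Fin (u i)))
        else Finset.univ)).card = ∏ i ∈ Finset.univ.erase z, u i := by
  rw [Fintype.card_piFinset]
  rw [← Finset.prod_erase_mul _ _ (Finset.mem_univ z)]
  have h1 : #(if z = z then ({⟨0, lt_of_lt_of_le hz (hmin z)⟩} : Finset (Fin (u z))) else Finset.univ) = 1 := by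
    rw [if_pos rfl]; simp
  rw [h1, mul_one]
  apply Finset.prod_congr rfl
  intro i hi
  rw [if_neg (Finset.ne_of_mem_erase hi)]
  simp

theorem claimA (hz : 0 < u z) (hmin : ∀ i, u z ≤ u i)
    (F : Finset (∀ i, Fin (u i)))
    (hint : ∀ f ∈ F, ∀ g ∈ F, ∃ i, f i = g i) :
    F.card ≤ ∏ i ∈ Finset.univ.erase z, u i := by
  classical
  rw [← target_card hz hmin]
  apply Finset.card_le_card_of_injOn (dmap (z := z) u)
  · intro f _; exact dmap_mem hz hmin f
  · exact dmap_injOn hz hmin F hint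


lemma mod_cancel_add_left {U a v w : ℕ} (hv : v < U) (hw : w < U)
    (h : (a + v) % U = (a + w) % U) : v = w := by
  have h' : a + v ≡ a + w [MOD U] := h
  have := Nat.ModEq.add_left_cancel' a h'
  rwa [Nat.ModEq, Nat.mod_eq_of_lt hv, Nat.mod_eq_of_lt hw] at this

lemma mod_cancel_add_right {U x y v : ℕ} (hx : x < U) (hy : y < U)
    (h : (x + v) % U = (y + v) % U) : x = y := by
  have h' : x + v ≡ y + v [MOD U] := h
  have := Nat.ModEq.add_right_cancel' v h'
  rwa [Nat.ModEq, Nat.mod_eq_of_lt hx, Nat.mod_eq_of_lt hy] at this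

theorem claimB (hz2 : 2 ≤ u z) (hmin : ∀ i, u z ≤ u i) (h3 : ∀ i, i ≠ z → 3 ≤ u i)
    (F : Finset (∀ i, Fin (u i)))
    (hint : ∀ f ∈ F, ∀ g ∈ F, ∃ i, f i = g i)
    (hcard : ∏ i ∈ Finset.univ.erase z, u i ≤ F.card) :
    ∃ (j : Fin e) (x : Fin (u j)), ∀ f ∈ F, f j = x := by
  classical
  have hz : 0 < u z := by omega
  have hpos : ∀ i, 0 < u i := fun i => lt_of_lt_of_le hz (hmin i)
  set Tset : Finset (∀ i, Fin (u i)) := Fintype.piFinset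
      (fun i => if i = z then ({⟨0, lt_of_lt_of_le hz (hmin i)⟩} : Finset (Fin (u i)))
        else Finset.univ) with hTdef
  have hinj := dmap_injOn hz hmin F hint
  -- surjectivity of dmap onto Tset
  have hsurj0 : ∀ y ∈ Tset, ∃ f, ∃ _ : f ∈ F, y = dmap (z := z) u f := by
    apply Finset.surj_on_of_inj_on_of_card_le (fun f _ => dmap (z := z) u f)
    · intro f _; exact dmap_mem hz hmin f
    · intro f g hf hg hfg; exact hinj hf hg hfg
    · rw [hTdef, target_card hz hmin]; exact hcard
  have hsurj : ∀ y, ∃ f, y ∈ Tset → f ∈ F ∧ dmap (z := z) u f = y := by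
    intro y
    by_cases hy : y ∈ Tset
    · obtain ⟨f, hf, he⟩ := hsurj0 y hy
      exact ⟨f, fun _ => ⟨hf, he.symm⟩⟩
    · exact ⟨fun i => ⟨0, hpos i⟩, fun h => absurd h hy⟩
  choose Fi hFi using hsurj
  have hFmem : ∀ y ∈ Tset, Fi y ∈ F := fun y hy => (hFi y hy).1
  have hFeq : ∀ y ∈ Tset, dmap (z := z) u (Fi y) = y := fun y hy => (hFi y hy).2
  -- members recovered
  have hK0 : ∀ f ∈ F, Fi (dmap (z := z) u f) = f := by
    intro f hf
    have hm := dmap_mem hz hmin f (u := u) (z := z)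
    rw [← hTdef] at hm
    exact hinj (hFmem _ hm) hf (hFeq _ hm)
  -- recovery of coordinates
  have hK1 : ∀ y ∈ Tset, ∀ i, i ≠ z →
      (Fi y i).val = ((y i).val + (Fi y z).val) % u i := by
    intro y hy i hiz
    have h0 : (y i).val = (u i - (Fi y z).val + (Fi y i).val) % u i := by
      have := congrArg Fin.val (congrFun (hFeq y hy) i)
      exact this.symm
    have hvlt : (Fi y z).val < u i := lt_of_lt_of_le (Fi y z).isLt (hmin i)
    rw [h0]
    exact (mod_recover (Fi y i).isLt hvlt).symm
  -- z-coordinates agree inside Tset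
  have hTz : ∀ y ∈ Tset, ∀ y' ∈ Tset, y z = y' z := by
    intro y hy y' hy'
    rw [hTdef, Fintype.mem_piFinset] at hy hy'
    have h1 := hy z; have h2 := hy' z
    rw [if_pos rfl, Finset.mem_singleton] at h1 h2
    rw [h1, h2]
  -- updates stay in Tset
  have hupd : ∀ y ∈ Tset, ∀ (i : Fin e), i ≠ z → ∀ w : Fin (u i),
      Function.update y i w ∈ Tset := by
    intro y hy i hiz w
    rw [hTdef, Fintype.mem_piFinset] at hy ⊢
    intro i'
    by_cases h : i' = i
    · subst h; rw [Function.update_self, if_neg hiz]; simp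
    · rw [Function.update_of_ne h]; exact hy i'
  -- R1c
  have hR1 : ∀ y ∈ Tset, ∀ y' ∈ Tset, y ≠ y' →
      Fi y z = Fi y' z ∨ ∃ i, i ≠ z ∧ Fi y i = Fi y' i := by
    intro y hy y' hy' _
    obtain ⟨i, hi⟩ := hint _ (hFmem y hy) _ (hFmem y' hy')
    by_cases hiz : i = z
    · left; rw [← hiz]; exact hi
    · right; exact ⟨i, hiz, hi⟩
  -- R2c
  have hR2 : ∀ y ∈ Tset, ∀ y' ∈ Tset, ∀ i, i ≠ z → y i = y' i →
      Fi y i = Fi y' i → Fi y z = Fi y' z := by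
    intro y hy y' hy' i hiz hcoord hfi
    have e1 := hK1 y hy i hiz
    have e2 := hK1 y' hy' i hiz
    rw [← hcoord] at e2
    have e3 : ((y i).val + (Fi y z).val) % u i = ((y i).val + (Fi y' z).val) % u i := by
      rw [← e1, ← e2, hfi]
    exact Fin.val_injective (mod_cancel_add_left
      (lt_of_lt_of_le (Fi y z).isLt (hmin i)) (lt_of_lt_of_le (Fi y' z).isLt (hmin i)) e3)
  -- lines: dichotomy D1
  have hD1 : ∀ y ∈ Tset, ∀ (j : Fin e), j ≠ z → ∀ ε ε' : Fin (u j),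
      Fi (Function.update y j ε) z = Fi (Function.update y j ε') z ∨
      Fi (Function.update y j ε) j = Fi (Function.update y j ε') j := by
    intro y hy j hjz ε ε'
    by_cases heps : ε = ε'
    · left; rw [heps]
    · have hm1 := hupd y hy j hjz ε
      have hm2 := hupd y hy j hjz ε'
      have hne : Function.update y j ε ≠ Function.update y j ε' := by
        intro h
        apply heps
        have := congrFun h j
        rwa [Function.update_self, Function.update_self] at this
      rcases hR1 _ hm1 _ hm2 hne with h | ⟨i, hiz, hi⟩
      · left; exact h
      · by_cases hij : i = j
        · right; rwa [hij] at hi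
        · left
          apply hR2 _ hm1 _ hm2 i hiz _ hi
          rw [Function.update_of_ne hij, Function.update_of_ne hij]
  -- D2: each line is vz-constant or wf-constant
  have hD2 : ∀ y ∈ Tset, ∀ (j : Fin e), j ≠ z →
      (∀ ε ε' : Fin (u j), Fi (Function.update y j ε) z = Fi (Function.update y j ε') z) ∨
      (∀ ε ε' : Fin (u j), Fi (Function.update y j ε) j = Fi (Function.update y j ε') j) := by
    intro y hy j hjz
    by_cases hv : ∀ ε ε' : Fin (u j),
        Fi (Function.update y j ε) z = Fi (Function.update y j ε') z
    · left; exact hv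
    · right
      push_neg at hv
      obtain ⟨ε₁, ε₂, h12⟩ := hv
      have key : ∀ ζ, Fi (Function.update y j ζ) j = Fi (Function.update y j ε₁) j := by
        intro ζ
        by_cases hz1 : Fi (Function.update y j ζ) z = Fi (Function.update y j ε₁) z
        · have h1 : Fi (Function.update y j ζ) j = Fi (Function.update y j ε₂) j := by
            rcases hD1 y hy j hjz ζ ε₂ with h | h
            · exact absurd (hz1.symm.trans h) h12
            · exact h
          have h2 : Fi (Function.update y j ε₁) j = Fi (Function.update y j ε₂) j := by
            rcases hD1 y hy j hjz ε₁ ε₂ with h | h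
            · exact absurd h h12
            · exact h
          rw [h1, h2]
        · rcases hD1 y hy j hjz ζ ε₁ with h | h
          · exact absurd h hz1
          · exact h
      intro ε ε'; rw [key ε, key ε']
  -- D4 : on a wf-constant line, vz is injective
  have hD4 : ∀ y ∈ Tset, ∀ (j : Fin e), ∀ _ : j ≠ z, ∀ W : Fin (u j),
      (∀ ε : Fin (u j), Fi (Function.update y j ε) j = W) →
      ∀ ε ε' : Fin (u j),
        Fi (Function.update y j ε) z = Fi (Function.update y j ε') z → ε = ε' := by
    intro y hy j hjz W hW ε ε' hvz
    have k1 := hK1 _ (hupd y hy j hjz ε) j hjz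
    have k2 := hK1 _ (hupd y hy j hjz ε') j hjz
    rw [hW ε, Function.update_self] at k1
    rw [hW ε', Function.update_self] at k2
    rw [hvz] at k1
    have e3 : (ε.val + (Fi (Function.update y j ε') z).val) % u j
        = (ε'.val + (Fi (Function.update y j ε') z).val) % u j := by
      rw [← k1, ← k2]
    exact Fin.val_injective (mod_cancel_add_right ε.isLt ε'.isLt e3)
  -- connectivity dichotomy
  have hCON : (∀ y ∈ Tset, ∀ y' ∈ Tset, Fi y z = Fi y' z) ∨
      (∃ y ∈ Tset, ∃ j : Fin e, ∃ _ : j ≠ z, ∃ ε : Fin (u j),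
        Fi (Function.update y j ε) z ≠ Fi y z) := by
    by_cases hadj : ∃ y ∈ Tset, ∃ j : Fin e, ∃ _ : j ≠ z, ∃ ε : Fin (u j),
        Fi (Function.update y j ε) z ≠ Fi y z
    · right; exact hadj
    · left
      push_neg at hadj
      have main : ∀ r : ℕ, ∀ y ∈ Tset, ∀ y' ∈ Tset,
          (Finset.univ.filter fun i => y i ≠ y' i).card ≤ r → Fi y z = Fi y' z := by
        intro r
        induction r with
        | zero =>
          intro y hy y' hy' hcard0
          have hemp : (Finset.univ.filter fun i => y i ≠ y' i) = ∅ :=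
            Finset.card_eq_zero.mp (Nat.le_antisymm hcard0 (Nat.zero_le _))
          have : y = y' := by
            funext i
            by_contra hne
            have : i ∈ (Finset.univ.filter fun i => y i ≠ y' i) := by
              simp [hne]
            rw [hemp] at this
            exact absurd this (Finset.notMem_empty i)
          rw [this]
        | succ r IH =>
          intro y hy y' hy' hcards
          by_cases hyy : y = y'
          · rw [hyy]
          · have : ∃ i, y i ≠ y' i := by
              by_contra hno
              push_neg at hno
              exact hyy (funext hno)
            obtain ⟨i₀, hi₀⟩ := this
            have hi₀z : i₀ ≠ z := by
              intro h; subst h; exact hi₀ (hTz y hy y' hy')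
            have hy'' : Function.update y' i₀ (y i₀) ∈ Tset := hupd y' hy' i₀ hi₀z _
            have hstep : Fi (Function.update y' i₀ (y i₀)) z = Fi y' z :=
              hadj y' hy' i₀ hi₀z (y i₀)
            have hsub : (Finset.univ.filter fun i => y i ≠ Function.update y' i₀ (y i₀) i)
                = (Finset.univ.filter fun i => y i ≠ y' i).erase i₀ := by
              ext i
              simp only [Finset.mem_erase, Finset.mem_filter, Finset.mem_univ, true_and]
              by_cases hii : i = i₀
              · subst hii
                rw [Function.update_self]
                simp
              · rw [Function.update_of_ne hii]
                simp [hii]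
            have hcard'' : (Finset.univ.filter
                fun i => y i ≠ Function.update y' i₀ (y i₀) i).card ≤ r := by
              rw [hsub]
              have hmem : i₀ ∈ (Finset.univ.filter fun i => y i ≠ y' i) := by simp [hi₀]
              have := Finset.card_erase_of_mem hmem
              omega
            exact (IH y hy _ hy'' hcard'').trans hstep
      intro y hy y' hy'
      exact main _ y hy y' hy' le_rfl
  -- default element of Tset
  have hydef : (fun i => (⟨0, hpos i⟩ : Fin (u i))) ∈ Tset := by
    rw [hTdef, Fintype.mem_piFinset]
    intro i
    by_cases hiz : i = z
    · subst hiz; rw [if_pos rfl]; simp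
    · rw [if_neg hiz]; simp
  rcases hCON with hconst | ⟨y₀, hy₀, j, hjz, ε₀, hne0⟩
  · -- star at coordinate z
    refine ⟨z, Fi (fun i => (⟨0, hpos i⟩ : Fin (u i))) z, ?_⟩
    intro f hf
    have hm := dmap_mem hz hmin f (u := u) (z := z)
    rw [← hTdef] at hm
    have h1 := hconst _ hm _ hydef
    have h2 := congrFun (hK0 f hf) z
    rw [← h2, h1]
  · -- star at coordinate j
    have hvnc : ¬(∀ ε ε' : Fin (u j),
        Fi (Function.update y₀ j ε) z = Fi (Function.update y₀ j ε') z) := by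
      intro hall
      apply hne0
      have := hall ε₀ (y₀ j)
      rwa [Function.update_eq_self] at this
    have hwc := (hD2 y₀ hy₀ j hjz).resolve_left hvnc
    have hWline : ∀ ε, Fi (Function.update y₀ j ε) j = Fi y₀ j := by
      intro ε
      have := hwc ε (y₀ j)
      rwa [Function.update_eq_self] at this
    have hBFS : ∀ r : ℕ, ∀ q ∈ Tset,
        (Finset.univ.filter fun i => q i ≠ y₀ i ∧ i ≠ j).card ≤ r →
        ∀ ε, Fi (Function.update q j ε) j = Fi y₀ j := by
      intro r
      induction r with
      | zero =>
        intro q hq hcard0 ε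
        have hemp : (Finset.univ.filter fun i => q i ≠ y₀ i ∧ i ≠ j) = ∅ :=
          Finset.card_eq_zero.mp (Nat.le_antisymm hcard0 (Nat.zero_le _))
        have hqy : Function.update q j ε = Function.update y₀ j ε := by
          funext i
          by_cases hij : i = j
          · subst hij; rw [Function.update_self, Function.update_self]
          · rw [Function.update_of_ne hij, Function.update_of_ne hij]
            by_contra hne
            have : i ∈ (Finset.univ.filter fun i => q i ≠ y₀ i ∧ i ≠ j) := by
              simp [hne, hij]
            rw [hemp] at this
            exact absurd this (Finset.notMem_empty i)
        rw [hqy]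
        exact hWline ε
      | succ r IH =>
        intro q hq hcard ε''
        by_cases hbase : (Finset.univ.filter fun i => q i ≠ y₀ i ∧ i ≠ j).card ≤ r
        · exact IH q hq hbase ε''
        · have hnonempty : (Finset.univ.filter fun i => q i ≠ y₀ i ∧ i ≠ j).Nonempty := by
            rw [← Finset.card_pos]; omega
          obtain ⟨istar, histar⟩ := hnonempty
          rw [Finset.mem_filter] at histar
          obtain ⟨-, hqi, hij⟩ := histar
          have histz : istar ≠ z := by
            intro h; subst h
            exact hqi (hTz q hq y₀ hy₀)
          have hqbar : Function.update q istar (y₀ istar) ∈ Tset := hupd q hq istar histz _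
          have hsub : (Finset.univ.filter
              fun i => Function.update q istar (y₀ istar) i ≠ y₀ i ∧ i ≠ j)
              = (Finset.univ.filter fun i => q i ≠ y₀ i ∧ i ≠ j).erase istar := by
            ext i
            simp only [Finset.mem_erase, Finset.mem_filter, Finset.mem_univ, true_and]
            by_cases hii : i = istar
            · subst hii
              rw [Function.update_self]
              simp
            · rw [Function.update_of_ne hii]
              simp [hii]
          have hqbarcard : (Finset.univ.filter
              fun i => Function.update q istar (y₀ istar) i ≠ y₀ i ∧ i ≠ j).card ≤ r := by
            rw [hsub]
            have hmem : istar ∈ (Finset.univ.filter fun i => q i ≠ y₀ i ∧ i ≠ j) := by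
              simp [hqi, hij]
            have := Finset.card_erase_of_mem hmem
            omega
          have hline' : ∀ ε, Fi (Function.update (Function.update q istar (y₀ istar)) j ε) j
              = Fi y₀ j := IH _ hqbar hqbarcard
          have hvinj : ∀ ε ε',
              Fi (Function.update (Function.update q istar (y₀ istar)) j ε) z
                = Fi (Function.update (Function.update q istar (y₀ istar)) j ε') z → ε = ε' :=
            hD4 _ hqbar j hjz _ hline'
          have hq''mem : Function.update q j ε'' ∈ Tset := hupd q hq j hjz ε''
          by_contra hgoal
          have hopt : ∀ ε : Fin (u j),
              (Fi (Function.update (Function.update q istar (y₀ istar)) j ε) z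
                = Fi (Function.update q j ε'') z) ∨
              (((y₀ istar).val
                  + (Fi (Function.update (Function.update q istar (y₀ istar)) j ε) z).val)
                    % u istar
                = ((q istar).val + (Fi (Function.update q j ε'') z).val) % u istar) := by
            intro ε
            have hmem := hupd _ hqbar j hjz ε
            have hne'' : Function.update q j ε'' ≠
                Function.update (Function.update q istar (y₀ istar)) j ε := by
              intro h
              have h2 := congrFun h istar
              rw [Function.update_of_ne hij, Function.update_of_ne hij,
                Function.update_self] at h2
              exact hqi h2
            rcases hR1 _ hq''mem _ hmem hne'' with h | ⟨i, hiz, hi⟩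
            · left; exact h.symm
            · by_cases hijj : i = j
              · exfalso
                apply hgoal
                subst hijj
                rw [hi]
                exact hline' ε
              · by_cases hiistar : i = istar
                · right
                  subst hiistar
                  have k1 := hK1 _ hq''mem i hiz
                  have k2 := hK1 _ hmem i hiz
                  rw [Function.update_of_ne hijj] at k1
                  rw [Function.update_of_ne hijj, Function.update_self] at k2
                  rw [← k1, ← k2, hi]
                · left
                  have hcoords : Function.update q j ε'' i
                      = Function.update (Function.update q istar (y₀ istar)) j ε i := by
                    rw [Function.update_of_ne hijj, Function.update_of_ne hijj,
                      Function.update_of_ne hiistar]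
                  exact (hR2 _ hq''mem _ hmem i hiz hcoords hi).symm
          have h3j : 3 ≤ u j := h3 j hjz
          have hB : ∀ ε ε' : Fin (u j),
              (((y₀ istar).val
                  + (Fi (Function.update (Function.update q istar (y₀ istar)) j ε) z).val)
                    % u istar
                = ((q istar).val + (Fi (Function.update q j ε'') z).val) % u istar) →
              (((y₀ istar).val
                  + (Fi (Function.update (Function.update q istar (y₀ istar)) j ε') z).val)
                    % u istar
                = ((q istar).val + (Fi (Function.update q j ε'') z).val) % u istar) →
              ε = ε' := by
            intro ε ε' hb hb'
            apply hvinj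
            apply Fin.val_injective
            refine mod_cancel_add_left (U := u istar) ?_ ?_ (hb.trans hb'.symm)
            · exact lt_of_lt_of_le (Fin.isLt _) (hmin istar)
            · exact lt_of_lt_of_le (Fin.isLt _) (hmin istar)
          have hA : ∀ ε ε' : Fin (u j),
              (Fi (Function.update (Function.update q istar (y₀ istar)) j ε) z
                = Fi (Function.update q j ε'') z) →
              (Fi (Function.update (Function.update q istar (y₀ istar)) j ε') z
                = Fi (Function.update q j ε'') z) →
              ε = ε' := by
            intro ε ε' ha ha'
            exact hvinj ε ε' (ha.trans ha'.symm)
          have d01 : (⟨0, by omega⟩ : Fin (u j)) ≠ ⟨1, by omega⟩ := by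
            intro h; exact absurd (congrArg Fin.val h) (by simp)
          have d02 : (⟨0, by omega⟩ : Fin (u j)) ≠ ⟨2, by omega⟩ := by
            intro h; exact absurd (congrArg Fin.val h) (by simp)
          have d12 : (⟨1, by omega⟩ : Fin (u j)) ≠ ⟨2, by omega⟩ := by
            intro h; exact absurd (congrArg Fin.val h) (by simp)
          rcases hopt ⟨0, by omega⟩ with h0 | h0 <;>
            rcases hopt ⟨1, by omega⟩ with h1 | h1 <;>
            rcases hopt ⟨2, by omega⟩ with h2 | h2
          · exact d01 (hA _ _ h0 h1)
          · exact d01 (hA _ _ h0 h1)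
          · exact d02 (hA _ _ h0 h2)
          · exact d12 (hB _ _ h1 h2)
          · exact d12 (hA _ _ h1 h2)
          · exact d02 (hB _ _ h0 h2)
          · exact d01 (hB _ _ h0 h1)
          · exact d01 (hB _ _ h0 h1)
    refine ⟨j, Fi y₀ j, ?_⟩
    intro f hf
    have hm := dmap_mem hz hmin f (u := u) (z := z)
    rw [← hTdef] at hm
    have h1 := hBFS _ _ hm le_rfl (dmap (z := z) u f j)
    rw [Function.update_eq_self] at h1
    have h2 := congrFun (hK0 f hf) j
    rw [← h2, h1]




section Transfer

variable {n d : ℕ} (T : Fin d → Finset (Fin n)) (t : Fin d → ℕ)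
  (hc : ∀ i, (T i).card = t i) (hpos : ∀ i, 0 < t i)

include hc hpos

/-- The transversal function attached to a rainbow set. -/
noncomputable def rho (S : Finset (Fin n)) : ∀ i, Fin (t i) := fun i =>
  if h : (S ∩ T i).Nonempty then
    ((T i).orderIsoOfFin (hc i)).symm
      ⟨(S ∩ T i).min' h, (Finset.mem_inter.mp ((S ∩ T i).min'_mem h)).2⟩
  else ⟨0, hpos i⟩

lemma rho_eq_of_singleton {S : Finset (Fin n)} {i : Fin d} {a : Fin n}
    (ha : S ∩ T i = {a}) :
    (((T i).orderIsoOfFin (hc i)) (rho T t hc hpos S i) : Fin n) = a := by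
  have hne : (S ∩ T i).Nonempty := by rw [ha]; exact ⟨a, Finset.mem_singleton_self a⟩
  rw [rho, dif_pos hne]
  rw [OrderIso.apply_symm_apply]
  simp only [ha, Finset.min'_singleton]

lemma mem_rho_point {S : Finset (Fin n)} {i : Fin d} {a : Fin n}
    (ha : S ∩ T i = {a}) : a ∈ S ∧ a ∈ T i := by
  have : a ∈ S ∩ T i := by rw [ha]; exact Finset.mem_singleton_self a
  exact ⟨(Finset.mem_inter.mp this).1, (Finset.mem_inter.mp this).2⟩


lemma rho_injOn (F : Finset (Finset (Fin n)))
    (hrb : ∀ S ∈ F, ∀ i, ∃ a, S ∩ T i = {a})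
    (hSU : ∀ S ∈ F, S ⊆ Finset.univ.biUnion T) :
    Set.InjOn (rho T t hc hpos) F := by
  classical
  have hrec : ∀ S ∈ F, S = Finset.univ.biUnion (fun i => S ∩ T i) := by
    intro S hS
    ext a
    simp only [Finset.mem_biUnion, Finset.mem_univ, true_and, Finset.mem_inter]
    constructor
    · intro haS
      have := hSU S hS haS
      rw [Finset.mem_biUnion] at this
      obtain ⟨i, -, hi⟩ := this
      exact ⟨i, haS, hi⟩
    · rintro ⟨i, h, -⟩; exact h
  intro S hS S' hS' h
  rw [hrec S hS, hrec S' hS']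
  apply Finset.biUnion_congr rfl
  intro i _
  obtain ⟨a, ha⟩ := hrb S hS i
  obtain ⟨a', ha'⟩ := hrb S' hS' i
  rw [ha, ha']
  have e1 := rho_eq_of_singleton T t hc hpos ha
  have e2 := rho_eq_of_singleton T t hc hpos ha'
  rw [h] at e1
  rw [e1] at e2
  rw [e2]

lemma rainbow_star_card_le (j : Fin d) (x : Fin n) (hx : x ∈ T j)
    (F : Finset (Finset (Fin n)))
    (hrb : ∀ S ∈ F, ∀ i, ∃ a, S ∩ T i = {a})
    (hSU : ∀ S ∈ F, S ⊆ Finset.univ.biUnion T)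
    (hxF : ∀ S ∈ F, x ∈ S) :
    F.card ≤ ∏ i ∈ Finset.univ.erase j, t i := by
  classical
  have hinj := rho_injOn T t hc hpos F hrb hSU
  have hcardim : F.card = (F.image (rho T t hc hpos)).card :=
    (Finset.card_image_of_injOn hinj).symm
  rw [hcardim]
  have hsub : F.image (rho T t hc hpos) ⊆ Fintype.piFinset
      (fun i => if h : i = j then
          {((T i).orderIsoOfFin (hc i)).symm ⟨x, h ▸ hx⟩} else Finset.univ) := by
    intro f hf
    rw [Finset.mem_image] at hf
    obtain ⟨S, hS, rfl⟩ := hf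
    rw [Fintype.mem_piFinset]
    intro i
    by_cases hij : i = j
    · subst hij
      rw [dif_pos rfl, Finset.mem_singleton]
      obtain ⟨a, ha⟩ := hrb S hS i
      have hax : a = x := by
        have : x ∈ S ∩ T i := Finset.mem_inter.mpr ⟨hxF S hS, hx⟩
        rw [ha, Finset.mem_singleton] at this
        exact this.symm
      subst hax
      have e1 := rho_eq_of_singleton T t hc hpos ha
      apply ((T i).orderIsoOfFin (hc i)).injective
      rw [OrderIso.apply_symm_apply]
      exact Subtype.ext e1
    · rw [dif_neg hij]; exact Finset.mem_univ _
  apply le_trans (Finset.card_le_card hsub)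
  rw [Fintype.card_piFinset]
  rw [← Finset.prod_erase_mul _ _ (Finset.mem_univ j)]
  have h1 : #(if h : j = j then
      ({((T j).orderIsoOfFin (hc j)).symm ⟨x, h ▸ hx⟩} : Finset (Fin (t j)))
      else Finset.univ) = 1 := by
    rw [dif_pos rfl]; simp
  rw [h1, mul_one]
  apply le_of_eq
  apply Finset.prod_congr rfl
  intro i hi
  rw [dif_neg (Finset.ne_of_mem_erase hi)]
  simp

/-- A family of pairwise-intersecting rainbow transversal sets is at most as large
as the product of all but the smallest block. -/
lemma rainbow_card_le (z : Fin d)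
    (hdisj : ∀ i j : Fin d, i ≠ j → Disjoint (T i) (T j))
    (hmin : ∀ i, t z ≤ t i)
    (F : Finset (Finset (Fin n)))
    (hrb : ∀ S ∈ F, ∀ i, ∃ a, S ∩ T i = {a})
    (hSU : ∀ S ∈ F, S ⊆ Finset.univ.biUnion T)
    (hint : ∀ S ∈ F, ∀ S' ∈ F, (S ∩ S').Nonempty) :
    F.card ≤ ∏ i ∈ Finset.univ.erase z, t i := by
  classical
  -- recovery of S from intersections
  have hrec : ∀ S ∈ F, S = Finset.univ.biUnion (fun i => S ∩ T i) := by
    intro S hS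
    ext a
    simp only [Finset.mem_biUnion, Finset.mem_univ, true_and, Finset.mem_inter]
    constructor
    · intro haS
      have := hSU S hS haS
      rw [Finset.mem_biUnion] at this
      obtain ⟨i, -, hi⟩ := this
      exact ⟨i, haS, hi⟩
    · rintro ⟨i, h, -⟩; exact h
  -- rho is injective on F
  have hinj : Set.InjOn (rho T t hc hpos) F := by
    intro S hS S' hS' h
    rw [hrec S hS, hrec S' hS']
    apply Finset.biUnion_congr rfl
    intro i _
    obtain ⟨a, ha⟩ := hrb S hS i
    obtain ⟨a', ha'⟩ := hrb S' hS' i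
    rw [ha, ha']
    have e1 := rho_eq_of_singleton T t hc hpos ha
    have e2 := rho_eq_of_singleton T t hc hpos ha'
    rw [h] at e1
    rw [e1] at e2
    rw [e2]
  -- agreement transfers
  have hagree : ∀ f ∈ F.image (rho T t hc hpos), ∀ g ∈ F.image (rho T t hc hpos),
      ∃ i, f i = g i := by
    intro f hf g hg
    rw [Finset.mem_image] at hf hg
    obtain ⟨S, hS, rfl⟩ := hf
    obtain ⟨S', hS', rfl⟩ := hg
    obtain ⟨x, hx⟩ := hint S hS S' hS'
    rw [Finset.mem_inter] at hx
    have hxU := hSU S hS hx.1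
    rw [Finset.mem_biUnion] at hxU
    obtain ⟨i, -, hxi⟩ := hxU
    refine ⟨i, ?_⟩
    obtain ⟨a, ha⟩ := hrb S hS i
    obtain ⟨a', ha'⟩ := hrb S' hS' i
    have hxa : x = a := by
      have : x ∈ S ∩ T i := Finset.mem_inter.mpr ⟨hx.1, hxi⟩
      rwa [ha, Finset.mem_singleton] at this
    have hxa' : x = a' := by
      have : x ∈ S' ∩ T i := Finset.mem_inter.mpr ⟨hx.2, hxi⟩
      rwa [ha', Finset.mem_singleton] at this
    have e1 := rho_eq_of_singleton T t hc hpos ha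
    have e2 := rho_eq_of_singleton T t hc hpos ha'
    apply ((T i).orderIsoOfFin (hc i)).injective
    apply Subtype.ext
    rw [e1, e2, ← hxa, ← hxa']
  have hcardim : F.card = (F.image (rho T t hc hpos)).card :=
    (Finset.card_image_of_injOn hinj).symm
  rw [hcardim]
  exact claimA (u := t) (z := z) (hpos z) hmin _ hagree

/-- Structure: a pairwise-intersecting family of rainbow transversal sets of full
size `∏_{i ≠ z} t i` is a star, provided all non-minimal blocks have size ≥ 3. -/
lemma rainbow_structure (z : Fin d)
    (hdisj : ∀ i j : Fin d, i ≠ j → Disjoint (T i) (T j))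
    (hmin : ∀ i, t z ≤ t i) (hz2 : 2 ≤ t z) (h3 : ∀ i, i ≠ z → 3 ≤ t i)
    (F : Finset (Finset (Fin n)))
    (hrb : ∀ S ∈ F, ∀ i, ∃ a, S ∩ T i = {a})
    (hSU : ∀ S ∈ F, S ⊆ Finset.univ.biUnion T)
    (hint : ∀ S ∈ F, ∀ S' ∈ F, (S ∩ S').Nonempty)
    (hbig : ∏ i ∈ Finset.univ.erase z, t i ≤ F.card) :
    ∃ (j : Fin d) (x : Fin n), x ∈ T j ∧ ∀ S ∈ F, x ∈ S := by
  classical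
  have hinj : Set.InjOn (rho T t hc hpos) F := by
    intro S hS S' hS' h
    have hrec : ∀ S ∈ F, S = Finset.univ.biUnion (fun i => S ∩ T i) := by
      intro S hS
      ext a
      simp only [Finset.mem_biUnion, Finset.mem_univ, true_and, Finset.mem_inter]
      constructor
      · intro haS
        have := hSU S hS haS
        rw [Finset.mem_biUnion] at this
        obtain ⟨i, -, hi⟩ := this
        exact ⟨i, haS, hi⟩
      · rintro ⟨i, h, -⟩; exact h
    rw [hrec S hS, hrec S' hS']
    apply Finset.biUnion_congr rfl
    intro i _
    obtain ⟨a, ha⟩ := hrb S hS i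
    obtain ⟨a', ha'⟩ := hrb S' hS' i
    rw [ha, ha']
    have e1 := rho_eq_of_singleton T t hc hpos ha
    have e2 := rho_eq_of_singleton T t hc hpos ha'
    rw [h] at e1
    rw [e1] at e2
    rw [e2]
  have hagree : ∀ f ∈ F.image (rho T t hc hpos), ∀ g ∈ F.image (rho T t hc hpos),
      ∃ i, f i = g i := by
    intro f hf g hg
    rw [Finset.mem_image] at hf hg
    obtain ⟨S, hS, rfl⟩ := hf
    obtain ⟨S', hS', rfl⟩ := hg
    obtain ⟨x, hx⟩ := hint S hS S' hS'
    rw [Finset.mem_inter] at hx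
    have hxU := hSU S hS hx.1
    rw [Finset.mem_biUnion] at hxU
    obtain ⟨i, -, hxi⟩ := hxU
    refine ⟨i, ?_⟩
    obtain ⟨a, ha⟩ := hrb S hS i
    obtain ⟨a', ha'⟩ := hrb S' hS' i
    have hxa : x = a := by
      have : x ∈ S ∩ T i := Finset.mem_inter.mpr ⟨hx.1, hxi⟩
      rwa [ha, Finset.mem_singleton] at this
    have hxa' : x = a' := by
      have : x ∈ S' ∩ T i := Finset.mem_inter.mpr ⟨hx.2, hxi⟩
      rwa [ha', Finset.mem_singleton] at this
    have e1 := rho_eq_of_singleton T t hc hpos ha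
    have e2 := rho_eq_of_singleton T t hc hpos ha'
    apply ((T i).orderIsoOfFin (hc i)).injective
    apply Subtype.ext
    rw [e1, e2, ← hxa, ← hxa']
  have hcardim : F.card = (F.image (rho T t hc hpos)).card :=
    (Finset.card_image_of_injOn hinj).symm
  obtain ⟨j, ξ, hjx⟩ := claimB (u := t) (z := z) hz2 hmin h3
    (F.image (rho T t hc hpos)) hagree (by rw [← hcardim]; exact hbig)
  refine ⟨j, (((T j).orderIsoOfFin (hc j)) ξ : { x // x ∈ T j }).val, ?_, ?_⟩
  · exact (((T j).orderIsoOfFin (hc j)) ξ).2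
  · intro S hS
    obtain ⟨a, ha⟩ := hrb S hS j
    have e1 := rho_eq_of_singleton T t hc hpos ha
    have := hjx _ (Finset.mem_image_of_mem _ hS)
    rw [this] at e1
    rw [e1]
    exact (mem_rho_point T t hc hpos ha).1

end Transfer


lemma choose_le_choose_right {N a b : ℕ} (hab : a ≤ b) (hb : 2 * b ≤ N + 1) :
    N.choose a ≤ N.choose b := by
  induction b with
  | zero =>
    have : a = 0 := by omega
    rw [this]
  | succ b IH =>
    rcases Nat.eq_or_lt_of_le hab with h | h
    · rw [h]
    · have h1 : a ≤ b := by omega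
      have h2 : 2 * b ≤ N + 1 := by omega
      refine le_trans (IH h1 h2) ?_
      have h3 := Nat.choose_succ_right_eq N b
      have h4 : N.choose b * (b + 1) ≤ N.choose b * (N - b) :=
        Nat.mul_le_mul_left _ (by omega)
      rw [← h3] at h4
      exact Nat.le_of_mul_le_mul_right h4 (by omega)

lemma star_lower {n d k : ℕ} (T : Fin d → Finset (Fin n)) (t : Fin d → ℕ)
    (hc : ∀ i, (T i).card = t i)
    (hdisj : ∀ i j : Fin d, i ≠ j → Disjoint (T i) (T j))
    (z : Fin d) (y₀ : Fin n) (hy₀ : y₀ ∈ T z)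
    (m : ℕ) (hkdm : k = d + m)
    (H : Finset (Finset (Fin n)))
    (hH : ∀ A, A ∈ H ↔ (A.card = k ∧ ∀ i, (A ∩ T i).Nonempty)) :
    (∏ i ∈ Finset.univ.erase z, t i)
        * ((n - (Finset.univ.biUnion T).card).choose m)
      ≤ (H.filter (fun A => y₀ ∈ A)).card := by
  classical
  set U := Finset.univ.biUnion T with hU
  have hTU : ∀ i, T i ⊆ U := by
    intro i a ha
    rw [hU, Finset.mem_biUnion]
    exact ⟨i, Finset.mem_univ i, ha⟩
  set Q := (Fintype.piFinset (fun i => if i = z then ({y₀} : Finset (Fin n)) else T i))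
      ×ˢ ((Finset.univ \ U).powersetCard m) with hQdef
  have hQcard : Q.card = (∏ i ∈ Finset.univ.erase z, t i)
      * ((n - U.card).choose m) := by
    rw [hQdef, Finset.card_product]
    congr 1
    · rw [Fintype.card_piFinset]
      rw [← Finset.prod_erase_mul _ _ (Finset.mem_univ z)]
      have h1 : #(if z = z then ({y₀} : Finset (Fin n)) else T z) = 1 := by
        rw [if_pos rfl]; simp
      rw [h1, mul_one]
      apply Finset.prod_congr rfl
      intro i hi
      rw [if_neg (Finset.ne_of_mem_erase hi)]
      exact hc i
    · rw [Finset.card_powersetCard]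
      congr 1
      rw [Finset.card_sdiff_of_subset (Finset.subset_univ U), Finset.card_univ, Fintype.card_fin]
  rw [← hQcard]
  apply Finset.card_le_card_of_injOn (fun p => (Finset.univ.image p.1) ∪ p.2)
  · rintro ⟨f, R⟩ hp
    rw [hQdef, Finset.mem_coe, Finset.mem_product] at hp
    obtain ⟨hf, hR⟩ := hp
    rw [Fintype.mem_piFinset] at hf
    rw [Finset.mem_powersetCard] at hR
    obtain ⟨hRsub, hRcard⟩ := hR
    dsimp only at hf hRsub hRcard
    have hfi : ∀ i, f i ∈ T i := by
      intro i
      have := hf i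
      by_cases hiz : i = z
      · subst hiz
        rw [if_pos rfl, Finset.mem_singleton] at this
        rw [this]; exact hy₀
      · rwa [if_neg hiz] at this
    have hfinj : ∀ i i', f i = f i' → i = i' := by
      intro i i' h
      by_contra hne
      have := hdisj i i' hne
      rw [Finset.disjoint_left] at this
      exact this (hfi i) (h ▸ hfi i')
    have himcard : (Finset.univ.image f).card = d := by
      rw [Finset.card_image_of_injOn (fun i _ i' _ h => hfinj i i' h)]
      simp
    have himU : (Finset.univ.image f) ⊆ U := by
      intro a ha
      rw [Finset.mem_image] at ha
      obtain ⟨i, -, rfl⟩ := ha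
      exact hTU i (hfi i)
    have hdisjIR : Disjoint (Finset.univ.image f) R := by
      rw [Finset.disjoint_left]
      intro a ha haR
      have := hRsub haR
      rw [Finset.mem_sdiff] at this
      exact this.2 (himU ha)
    have hAcard : ((Finset.univ.image f) ∪ R).card = k := by
      rw [Finset.card_union_of_disjoint hdisjIR, himcard, hRcard, hkdm]
    rw [Finset.mem_coe, Finset.mem_filter]
    constructor
    · rw [hH]
      refine ⟨hAcard, fun i => ⟨f i, ?_⟩⟩
      rw [Finset.mem_inter]
      exact ⟨Finset.mem_union_left _ (Finset.mem_image_of_mem f (Finset.mem_univ i)),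
        hfi i⟩
    · apply Finset.mem_union_left
      have := hf z
      rw [if_pos rfl, Finset.mem_singleton] at this
      rw [← this]
      exact Finset.mem_image_of_mem f (Finset.mem_univ z)
  · rintro ⟨f, R⟩ hp ⟨f', R'⟩ hp' heq
    rw [Finset.mem_coe, Finset.mem_product] at hp hp'
    obtain ⟨hf, hR⟩ := hp
    obtain ⟨hf', hR'⟩ := hp'
    rw [Fintype.mem_piFinset] at hf hf'
    rw [Finset.mem_powersetCard] at hR hR'
    dsimp only at hf hf' hR hR' heq
    have hfi : ∀ i, f i ∈ T i := by
      intro i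
      have := hf i
      by_cases hiz : i = z
      · subst hiz
        rw [if_pos rfl, Finset.mem_singleton] at this
        rw [this]; exact hy₀
      · rwa [if_neg hiz] at this
    have hfi' : ∀ i, f' i ∈ T i := by
      intro i
      have := hf' i
      by_cases hiz : i = z
      · subst hiz
        rw [if_pos rfl, Finset.mem_singleton] at this
        rw [this]; exact hy₀
      · rwa [if_neg hiz] at this
    have htail : ∀ (g : Fin d → Fin n) (Rg : Finset (Fin n)), (∀ i, g i ∈ T i) →
        Rg ⊆ Finset.univ \ U → ((Finset.univ.image g) ∪ Rg) \ U = Rg := by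
      intro g Rg hgi hRg
      ext a
      rw [Finset.mem_sdiff, Finset.mem_union]
      constructor
      · rintro ⟨h1 | h1, h2⟩
        · exfalso
          rw [Finset.mem_image] at h1
          obtain ⟨i, -, rfl⟩ := h1
          exact h2 (hTU i (hgi i))
        · exact h1
      · intro h
        have := hRg h
        rw [Finset.mem_sdiff] at this
        exact ⟨Or.inr h, this.2⟩
    have hRR : R = R' := by
      rw [← htail f R hfi hR.1, ← htail f' R' hfi' hR'.1, heq]
    have hsing : ∀ (g : Fin d → Fin n) (Rg : Finset (Fin n)), (∀ i, g i ∈ T i) →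
        Rg ⊆ Finset.univ \ U → ∀ i, ((Finset.univ.image g) ∪ Rg) ∩ T i = {g i} := by
      intro g Rg hgi hRg i
      ext a
      rw [Finset.mem_inter, Finset.mem_union, Finset.mem_singleton]
      constructor
      · rintro ⟨h1 | h1, h2⟩
        · rw [Finset.mem_image] at h1
          obtain ⟨i', -, rfl⟩ := h1
          by_cases hii : i' = i
          · rw [hii]
          · exfalso
            have := hdisj i' i hii
            rw [Finset.disjoint_left] at this
            exact this (hgi i') h2
        · exfalso
          have := hRg h1
          rw [Finset.mem_sdiff] at this
          exact this.2 (hTU i h2)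
      · intro h
        subst h
        exact ⟨Or.inl (Finset.mem_image_of_mem g (Finset.mem_univ i)), hgi i⟩
    have hff : f = f' := by
      funext i
      have e1 := hsing f R hfi hR.1 i
      have e2 := hsing f' R' hfi' hR'.1 i
      rw [heq] at e1
      rw [e1] at e2
      exact Finset.singleton_injective e2
    rw [Prod.mk.injEq]
    exact ⟨hff, hRR⟩

end EKRAux

set_option maxHeartbeats 16000000 in
open EKRAux in
/-- Theorem 5.2: given `2 ≤ d ≤ k` and `2 ≤ t₁ ≤ t₂ ≤ ⋯ ≤ t_d` with `t₂ ≥ k-d+2`, for all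
sufficiently large `n` and any pairwise disjoint sets `T₁, …, T_d ⊆ [n]` with `|Tᵢ| = tᵢ`,
the family `H` of `k`-subsets of `[n]` meeting every `Tᵢ` has the EKR property: every
intersecting subfamily of `H` has size at most the size of some star of `H`. -/
theorem ekr_property_transversal (d k : ℕ) (hd : 2 ≤ d) (hdk : d ≤ k)
    (t : Fin d → ℕ) (hmono : Monotone t)
    (ht1 : 2 ≤ t ⟨0, by omega⟩) (ht2 : k - d + 2 ≤ t ⟨1, by omega⟩) :
    ∃ n₀ : ℕ, ∀ n : ℕ, n₀ ≤ n →
      ∀ T : Fin d → Finset (Fin n),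
        (∀ i j : Fin d, i ≠ j → Disjoint (T i) (T j)) →
        (∀ i : Fin d, (T i).card = t i) →
        ∀ H : Finset (Finset (Fin n)),
          (∀ A : Finset (Fin n),
            A ∈ H ↔ (A.card = k ∧ ∀ i : Fin d, (A ∩ T i).Nonempty)) →
          ∀ G ⊆ H, (∀ A ∈ G, ∀ B ∈ G, (A ∩ B).Nonempty) →
            ∃ x : Fin n, G.card ≤ (H.filter (fun A => x ∈ A)).card := by
  classical
  have hz0lt : 0 < d := by omega
  have hz1lt : 1 < d := by omega
  set z0 : Fin d := ⟨0, by omega⟩ with hz0def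
  set z1 : Fin d := ⟨1, by omega⟩ with hz1def
  set m : ℕ := k - d with hmdef
  have hkdm : k = d + m := by omega
  set u : ℕ := ∑ i, t i with hudef
  set P : ℕ := ∏ i ∈ Finset.univ.erase z0, t i with hPdef
  refine ⟨u + m * (2 ^ u * (m + 1)) + 2 * m + 2, ?_⟩
  intro n hn T hdisj hTcard H hH G hGH hGint
  -- basic t facts
  have ht2' : ∀ i, 2 ≤ t i := by
    intro i
    refine le_trans ht1 (hmono ?_)
    show z0 ≤ i
    rw [Fin.le_def]
    exact Nat.zero_le _
  have htpos : ∀ i, 0 < t i := fun i => lt_of_lt_of_le (by omega) (ht2' i)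
  have hti : ∀ i, i ≠ z0 → m + 2 ≤ t i := by
    intro i hi
    have h1 : z1 ≤ i := by
      rw [Fin.le_def]
      have h2 : i.val ≠ 0 := by
        intro h
        exact hi (Fin.ext h)
      show 1 ≤ i.val
      omega
    calc m + 2 = k - d + 2 := by omega
    _ ≤ t z1 := ht2
    _ ≤ t i := hmono h1
  have hminz : ∀ i, t z0 ≤ t i := fun i => hmono (by rw [Fin.le_def]; exact Nat.zero_le _)
  have hPpos : 0 < P := Finset.prod_pos fun i _ => htpos i
  set U : Finset (Fin n) := Finset.univ.biUnion T with hUdef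
  have hTU : ∀ i, T i ⊆ U := fun i a ha => Finset.mem_biUnion.mpr ⟨i, Finset.mem_univ i, ha⟩
  have hUcard : U.card = u := by
    rw [hUdef, Finset.card_biUnion (fun i _ j _ hij => hdisj i j hij)]
    exact Finset.sum_congr rfl fun i _ => hTcard i
  have hUcompcard : (Finset.univ \ U).card = n - u := by
    rw [Finset.card_sdiff_of_subset (Finset.subset_univ _), Finset.card_univ, Fintype.card_fin, hUcard]
  -- star lower bound
  have hT0ne : (T z0).Nonempty := by
    rw [← Finset.card_pos, hTcard]
    exact htpos z0
  obtain ⟨y₀, hy₀⟩ := hT0ne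
  have hstar := star_lower T t hTcard hdisj z0 y₀ hy₀ m hkdm H hH
  rw [← hUdef, hUcard] at hstar
  rw [← hPdef] at hstar
  -- member facts
  have hGH' : ∀ A ∈ G, A.card = k ∧ ∀ i, (A ∩ T i).Nonempty := fun A hA => (hH A).mp (hGH hA)
  have hAU : ∀ A : Finset (Fin n), A ∩ U = Finset.univ.biUnion (fun i => A ∩ T i) := by
    intro A
    rw [hUdef]
    ext a
    constructor
    · intro h
      rw [Finset.mem_inter] at h
      obtain ⟨h1, h2⟩ := h
      rw [Finset.mem_biUnion] at h2 ⊢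
      obtain ⟨i, -, h3⟩ := h2
      exact ⟨i, Finset.mem_univ i, Finset.mem_inter.mpr ⟨h1, h3⟩⟩
    · intro h
      rw [Finset.mem_biUnion] at h
      obtain ⟨i, -, h3⟩ := h
      rw [Finset.mem_inter] at h3 ⊢
      refine ⟨h3.1, ?_⟩
      rw [Finset.mem_biUnion]
      exact ⟨i, Finset.mem_univ i, h3.2⟩
  have hAUcard : ∀ A : Finset (Fin n), (A ∩ U).card = ∑ i, (A ∩ T i).card := by
    intro A
    rw [hAU A, Finset.card_biUnion]
    intro i _ j _ hij
    exact (hdisj i j hij).mono Finset.inter_subset_right Finset.inter_subset_right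
  have hdle : ∀ A ∈ G, d ≤ (A ∩ U).card := by
    intro A hA
    rw [hAUcard A]
    calc d = ∑ _i : Fin d, 1 := by simp
    _ ≤ ∑ i, (A ∩ T i).card :=
      Finset.sum_le_sum fun i _ => Finset.card_pos.mpr ((hGH' A hA).2 i)
  have hsum_erase : ∀ A ∈ G, ∀ i : Fin d,
      d - 1 ≤ ∑ j ∈ Finset.univ.erase i, (A ∩ T j).card := by
    intro A hA i
    have hce : (Finset.univ.erase i).card = d - 1 := by
      rw [Finset.card_erase_of_mem (Finset.mem_univ i), Finset.card_univ, Fintype.card_fin]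
    have h1 := Finset.card_nsmul_le_sum (Finset.univ.erase i) (fun j => (A ∩ T j).card) 1
      (fun j _ => Finset.card_pos.mpr ((hGH' A hA).2 j))
    rwa [smul_eq_mul, mul_one, hce] at h1
  have hcap : ∀ A ∈ G, ∀ i, (A ∩ T i).card ≤ m + 1 := by
    intro A hA i
    have h1 : (A ∩ U).card ≤ k :=
      le_trans (Finset.card_le_card Finset.inter_subset_left) (le_of_eq (hGH' A hA).1)
    rw [hAUcard A, ← Finset.sum_erase_add _ _ (Finset.mem_univ i)] at h1
    have h2 := hsum_erase A hA i
    omega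
  have hsingle : ∀ A ∈ G, (A ∩ U).card = d → ∀ i, ∃ a, A ∩ T i = {a} := by
    intro A hA hcard i
    have h1 := hAUcard A
    rw [hcard] at h1
    have h2 : 1 ≤ (A ∩ T i).card := Finset.card_pos.mpr ((hGH' A hA).2 i)
    have h3 : (A ∩ T i).card ≤ 1 := by
      have h4 := hsum_erase A hA i
      rw [← Finset.sum_erase_add _ _ (Finset.mem_univ i)] at h1
      omega
    exact Finset.card_eq_one.mp (le_antisymm h3 h2)
  have hSTi : ∀ S : Finset (Fin n), ∀ i, S ∩ U ∩ T i = S ∩ T i := by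
    intro S i
    ext a
    simp only [Finset.mem_inter]
    constructor
    · rintro ⟨⟨h1, -⟩, h2⟩
      exact ⟨h1, h2⟩
    · rintro ⟨h1, h2⟩
      exact ⟨⟨h1, hTU i h2⟩, h2⟩
  -- classes
  set cls : Finset (Fin n) → Finset (Finset (Fin n)) :=
    fun S => G.filter (fun A => A ∩ U = S) with hclsdef
  have hGsum : G.card = ∑ S ∈ U.powerset, (cls S).card :=
    Finset.card_eq_sum_card_fiberwise
      (fun A _ => Finset.mem_powerset.mpr Finset.inter_subset_right)
  have hclsb : ∀ S : Finset (Fin n), (cls S).card ≤ (n - u).choose (k - S.card) := by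
    intro S
    have h1 : ((Finset.univ \ U).powersetCard (k - S.card)).card
        = (n - u).choose (k - S.card) := by
      rw [Finset.card_powersetCard, hUcompcard]
    rw [← h1]
    apply Finset.card_le_card_of_injOn (fun A => A \ U)
    · intro A hA
      rw [Finset.mem_coe, hclsdef, Finset.mem_filter] at hA
      obtain ⟨hAG, hAS⟩ := hA
      rw [Finset.mem_coe, Finset.mem_powersetCard]
      constructor
      · intro a ha
        rw [Finset.mem_sdiff] at ha ⊢
        exact ⟨Finset.mem_univ a, ha.2⟩
      · have h2 := Finset.card_inter_add_card_sdiff A U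
        rw [hAS, (hGH' A hAG).1] at h2
        dsimp only
        omega
    · intro A hA A' hA' heq
      dsimp only at heq
      rw [Finset.mem_coe, hclsdef, Finset.mem_filter] at hA hA'
      have hrecA : ∀ B ∈ G, B ∩ U = S → B = S ∪ (B \ U) := by
        intro B _ hBS
        ext a
        rw [Finset.mem_union, Finset.mem_sdiff, ← hBS, Finset.mem_inter]
        by_cases haU : a ∈ U
        · constructor
          · intro h; exact Or.inl ⟨h, haU⟩
          · rintro (⟨h, -⟩ | ⟨h, -⟩) <;> exact h
        · constructor
          · intro h; exact Or.inr ⟨h, haU⟩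
          · rintro (⟨-, h⟩ | ⟨h, -⟩)
            · exact absurd h haU
            · exact h
      rw [hrecA A hA.1 hA.2, hrecA A' hA'.1 hA'.2, heq]
  have hkill : ∀ S : Finset (Fin n), S.card = d → ∀ B ∈ G, S ∩ B = ∅ →
      (cls S).card ≤ m * (n - u).choose (m - 1) := by
    intro S hSd B hB hSB
    have hBtail : (B \ U).card ≤ m := by
      have h1 := Finset.card_inter_add_card_sdiff B U
      have h2 := hdle B hB
      have h3 := (hGH' B hB).1
      omega
    have hstep : (cls S).card ≤
        (((Finset.univ \ U).powersetCard m).filter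
          (fun R => (R ∩ (B \ U)).Nonempty)).card := by
      apply Finset.card_le_card_of_injOn (fun A => A \ U)
      · intro A hA
        rw [Finset.mem_coe, hclsdef, Finset.mem_filter] at hA
        obtain ⟨hAG, hAS⟩ := hA
        rw [Finset.mem_coe, Finset.mem_filter, Finset.mem_powersetCard]
        refine ⟨⟨?_, ?_⟩, ?_⟩
        · intro a ha
          rw [Finset.mem_sdiff] at ha ⊢
          exact ⟨Finset.mem_univ a, ha.2⟩
        · have h2 := Finset.card_inter_add_card_sdiff A U
          rw [hAS, hSd, (hGH' A hAG).1] at h2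
          dsimp only
          omega
        · obtain ⟨x, hx⟩ := hGint A hAG B hB
          rw [Finset.mem_inter] at hx
          have hxU : x ∉ U := by
            intro hxU
            have : x ∈ S ∩ B := by
              rw [Finset.mem_inter, ← hAS, Finset.mem_inter]
              exact ⟨⟨hx.1, hxU⟩, hx.2⟩
            rw [hSB] at this
            exact absurd this (Finset.notMem_empty x)
          exact ⟨x, by
            rw [Finset.mem_inter, Finset.mem_sdiff, Finset.mem_sdiff]
            exact ⟨⟨hx.1, hxU⟩, hx.2, hxU⟩⟩
      · intro A hA A' hA' heq
        dsimp only at heq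
        rw [Finset.mem_coe, hclsdef, Finset.mem_filter] at hA hA'
        have hrecA : ∀ C : Finset (Fin n), C ∩ U = S → C = S ∪ (C \ U) := by
          intro C hCS
          ext a
          rw [Finset.mem_union, Finset.mem_sdiff, ← hCS, Finset.mem_inter]
          by_cases haU : a ∈ U
          · constructor
            · intro h; exact Or.inl ⟨h, haU⟩
            · rintro (⟨h, -⟩ | ⟨h, -⟩) <;> exact h
          · constructor
            · intro h; exact Or.inr ⟨h, haU⟩
            · rintro (⟨-, h⟩ | ⟨h, -⟩)
              · exact absurd h haU
              · exact h
        rw [hrecA A hA.2, hrecA A' hA'.2, heq]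
    refine le_trans hstep ?_
    have hsub : ((Finset.univ \ U).powersetCard m).filter
        (fun R => (R ∩ (B \ U)).Nonempty) ⊆
        (B \ U).biUnion (fun x => ((Finset.univ \ U).powersetCard m).filter
          (fun R => x ∈ R)) := by
      intro R hR
      rw [Finset.mem_filter] at hR
      obtain ⟨hR1, x, hx⟩ := hR
      rw [Finset.mem_inter] at hx
      rw [Finset.mem_biUnion]
      exact ⟨x, hx.2, Finset.mem_filter.mpr ⟨hR1, hx.1⟩⟩
    refine le_trans (Finset.card_le_card hsub) ?_
    refine le_trans Finset.card_biUnion_le ?_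
    have hone : ∀ x ∈ B \ U, (((Finset.univ \ U).powersetCard m).filter
        (fun R => x ∈ R)).card ≤ (n - u).choose (m - 1) := by
      intro x _
      have h1 : ((Finset.univ \ U).powersetCard (m - 1)).card
          = (n - u).choose (m - 1) := by
        rw [Finset.card_powersetCard, hUcompcard]
      rw [← h1]
      apply Finset.card_le_card_of_injOn (fun R => R.erase x)
      · intro R hR
        rw [Finset.mem_coe, Finset.mem_filter, Finset.mem_powersetCard] at hR
        obtain ⟨⟨hR1, hR2⟩, hR3⟩ := hR
        rw [Finset.mem_coe, Finset.mem_powersetCard]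
        constructor
        · exact fun a ha => hR1 (Finset.mem_of_mem_erase ha)
        · rw [Finset.card_erase_of_mem hR3, hR2]
      · intro R hR R' hR' heq
        dsimp only at heq
        rw [Finset.mem_coe, Finset.mem_filter] at hR hR'
        rw [← Finset.insert_erase hR.2, ← Finset.insert_erase hR'.2, heq]
    refine le_trans (Finset.sum_le_card_nsmul _ _ _ hone) ?_
    rw [smul_eq_mul]
    exact Nat.mul_le_mul_right _ hBtail
  -- the heavy family
  set HVY : Finset (Finset (Fin n)) := U.powerset.filter (fun S =>
    (S.card = d ∧ ∀ i, ∃ a, S ∩ T i = {a}) ∧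
      m * ((n - u).choose (m - 1)) < (cls S).card) with hHVYdef
  have hHVYmem : ∀ S ∈ HVY, S ⊆ U ∧ S.card = d ∧ (∀ i, ∃ a, S ∩ T i = {a}) ∧
      m * ((n - u).choose (m - 1)) < (cls S).card := by
    intro S hS
    rw [hHVYdef, Finset.mem_filter, Finset.mem_powerset] at hS
    exact ⟨hS.1, hS.2.1.1, hS.2.1.2, hS.2.2⟩
  have hHVYint : ∀ S ∈ HVY, ∀ S' ∈ HVY, (S ∩ S').Nonempty := by
    intro S hS S' hS'
    obtain ⟨hSU, hSd, hSsing, hSheavy⟩ := hHVYmem S hS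
    obtain ⟨hSU', hSd', hSsing', hSheavy'⟩ := hHVYmem S' hS'
    by_contra hempty
    rw [Finset.not_nonempty_iff_eq_empty] at hempty
    have hclsne : (cls S').Nonempty := by
      rw [← Finset.card_pos]
      omega
    obtain ⟨B, hBc⟩ := hclsne
    rw [hclsdef, Finset.mem_filter] at hBc
    have hSB : S ∩ B = ∅ := by
      rw [Finset.eq_empty_iff_forall_notMem]
      intro x hx
      rw [Finset.mem_inter] at hx
      have : x ∈ S ∩ S' := by
        rw [Finset.mem_inter, ← hBc.2, Finset.mem_inter]
        exact ⟨hx.1, hx.2, hSU hx.1⟩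
      rw [hempty] at this
      exact absurd this (Finset.notMem_empty x)
    exact absurd (hkill S hSd B hBc.1 hSB) (not_le.mpr hSheavy)
  have hHVYle : HVY.card ≤ P := by
    rw [hPdef]
    apply rainbow_card_le T t hTcard htpos z0 hdisj hminz HVY
    · exact fun S hS => (hHVYmem S hS).2.2.1
    · exact fun S hS => (hHVYmem S hS).1
    · exact hHVYint
  by_cases hm0 : m = 0
  · -- k = d : every member of G is a rainbow transversal
    refine ⟨y₀, ?_⟩
    have hAUd : ∀ A ∈ G, (A ∩ U).card = d := by
      intro A hA
      have h1 := hdle A hA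
      have h2 : (A ∩ U).card ≤ k :=
        le_trans (Finset.card_le_card Finset.inter_subset_left) (le_of_eq (hGH' A hA).1)
      omega
    have hGrb : ∀ A ∈ G, ∀ i, ∃ a, A ∩ T i = {a} := by
      intro A hA
      exact hsingle A hA (hAUd A hA)
    have hGsub : ∀ A ∈ G, A ⊆ U := by
      intro A hA
      have h1 : A ∩ U = A := by
        apply Finset.eq_of_subset_of_card_le Finset.inter_subset_left
        rw [hAUd A hA, (hGH' A hA).1]
        omega
      rw [← h1]
      exact Finset.inter_subset_right
    have hGP : G.card ≤ P := by
      rw [hPdef]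
      exact rainbow_card_le T t hTcard htpos z0 hdisj hminz G hGrb hGsub hGint
    refine le_trans hGP (le_trans ?_ hstar)
    rw [hm0, Nat.choose_zero_right, mul_one]
  · by_cases hcen : ∃ x : Fin n, ∀ A ∈ G, x ∈ A
    · obtain ⟨x, hx⟩ := hcen
      exact ⟨x, Finset.card_le_card fun A hA => Finset.mem_filter.mpr ⟨hGH hA, hx A hA⟩⟩
    · refine ⟨y₀, ?_⟩
      -- non-centered: heavy family has at most P - 1 members
      have hHVYlt : HVY.card ≤ P - 1 := by
        by_contra hbig
        have hPle : P ≤ HVY.card := by omega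
        obtain ⟨j, x, hxTj, hxall⟩ := rainbow_structure T t hTcard htpos z0 hdisj hminz
          (ht2' z0) (fun i hi => le_trans (by omega) (hti i hi)) HVY
          (fun S hS => (hHVYmem S hS).2.2.1) (fun S hS => (hHVYmem S hS).1)
          hHVYint (by rw [← hPdef]; exact hPle)
        apply hcen
        refine ⟨x, ?_⟩
        intro B hB
        by_contra hxB
        -- counting : HVY is the full star of rainbow sets at x
        set Rx : Finset (Finset (Fin n)) := U.powerset.filter
          (fun S => (S.card = d ∧ ∀ i, ∃ a, S ∩ T i = {a}) ∧ x ∈ S) with hRxdef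
        have hHRx : HVY ⊆ Rx := by
          intro S hS
          obtain ⟨hSU, hSd, hSsing, -⟩ := hHVYmem S hS
          rw [hRxdef, Finset.mem_filter, Finset.mem_powerset]
          exact ⟨hSU, ⟨hSd, hSsing⟩, hxall S hS⟩
        have hRxle : Rx.card ≤ ∏ i ∈ Finset.univ.erase j, t i := by
          apply rainbow_star_card_le T t hTcard htpos j x hxTj Rx
          · intro S hS
            rw [hRxdef, Finset.mem_filter] at hS
            exact hS.2.1.2
          · intro S hS
            rw [hRxdef, Finset.mem_filter, Finset.mem_powerset] at hS
            exact hS.1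
          · intro S hS
            rw [hRxdef, Finset.mem_filter] at hS
            exact hS.2.2
        have hPlePj : P ≤ ∏ i ∈ Finset.univ.erase j, t i :=
          le_trans hPle (le_trans (Finset.card_le_card hHRx) hRxle)
        have he1 : t z0 * P = t j * ∏ i ∈ Finset.univ.erase j, t i := by
          rw [hPdef, Finset.mul_prod_erase _ _ (Finset.mem_univ z0),
            Finset.mul_prod_erase _ _ (Finset.mem_univ j)]
        have htj0 : t j = t z0 := by
          have h3 : t j * P ≤ t j * ∏ i ∈ Finset.univ.erase j, t i :=
            Nat.mul_le_mul_left _ hPlePj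
          rw [← he1] at h3
          have h4 : t j ≤ t z0 := Nat.le_of_mul_le_mul_right h3 hPpos
          exact le_antisymm h4 (hminz j)
        have hPje : ∏ i ∈ Finset.univ.erase j, t i = P := by
          rw [htj0] at he1
          exact (Nat.eq_of_mul_eq_mul_left (htpos z0) he1).symm
        have hHVYRx : HVY = Rx := by
          apply Finset.eq_of_subset_of_card_le hHRx
          rw [← hPje] at hPle
          exact le_trans hRxle (le_trans (le_of_eq hPje) (le_trans (hPje ▸ hPle) le_rfl))
        -- construct a rainbow set avoiding B and containing x
        have hTBne : ∀ i : Fin d, i ≠ j → (T i \ B).Nonempty := by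
          intro i hij
          rw [← Finset.card_pos]
          have h1 : (T i ∩ B).card ≤ m + 1 := by
            have := hcap B hB i
            rwa [Finset.inter_comm] at this
          have h2 : m + 2 ≤ t i := by
            by_cases hiz : i = z0
            · subst hiz
              rw [← htj0]
              apply hti j
              intro h
              exact hij h.symm
            · exact hti i hiz
          have h3 := Finset.card_inter_add_card_sdiff (T i) B
          rw [hTcard i] at h3
          omega
        set pick : Fin d → Fin n := fun i =>
          if h : i = j then x else (T i \ B).min' (hTBne i h) with hpickdef
        have hpickT : ∀ i, pick i ∈ T i := by
          intro i
          simp only [hpickdef]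
          by_cases h : i = j
          · subst h
            rw [dif_pos rfl]
            exact hxTj
          · rw [dif_neg h]
            exact (Finset.mem_sdiff.mp ((T i \ B).min'_mem _)).1
        have hpicknB : ∀ i, pick i ∉ B := by
          intro i
          simp only [hpickdef]
          by_cases h : i = j
          · subst h
            rw [dif_pos rfl]
            exact hxB
          · rw [dif_neg h]
            exact (Finset.mem_sdiff.mp ((T i \ B).min'_mem _)).2
        have hpickinj : ∀ i i', pick i = pick i' → i = i' := by
          intro i i' h
          by_contra hne
          have := hdisj i i' hne
          rw [Finset.disjoint_left] at this
          exact this (hpickT i) (h ▸ hpickT i')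
        set S' : Finset (Fin n) := Finset.univ.image pick with hS'def
        have hS'card : S'.card = d := by
          rw [hS'def, Finset.card_image_of_injOn (fun i _ i' _ h => hpickinj i i' h),
            Finset.card_univ, Fintype.card_fin]
        have hS'sing : ∀ i, S' ∩ T i = {pick i} := by
          intro i
          ext a
          rw [Finset.mem_inter, hS'def, Finset.mem_singleton]
          constructor
          · rintro ⟨h1, h2⟩
            rw [Finset.mem_image] at h1
            obtain ⟨i', -, rfl⟩ := h1
            by_cases hii : i' = i
            · rw [hii]
            · exfalso
              have := hdisj i' i hii
              rw [Finset.disjoint_left] at this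
              exact this (hpickT i') h2
          · intro h
            subst h
            exact ⟨Finset.mem_image_of_mem pick (Finset.mem_univ i), hpickT i⟩
        have hS'Rx : S' ∈ Rx := by
          rw [hRxdef, Finset.mem_filter, Finset.mem_powerset]
          refine ⟨?_, ⟨hS'card, fun i => ⟨pick i, hS'sing i⟩⟩, ?_⟩
          · intro a ha
            rw [hS'def, Finset.mem_image] at ha
            obtain ⟨i, -, rfl⟩ := ha
            exact hTU i (hpickT i)
          · have : pick j = x := by simp [hpickdef]
            rw [hS'def, ← this]
            exact Finset.mem_image_of_mem pick (Finset.mem_univ j)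
        rw [← hHVYRx] at hS'Rx
        have hS'heavy := (hHVYmem S' hS'Rx).2.2.2
        have hS'B : S' ∩ B = ∅ := by
          rw [Finset.eq_empty_iff_forall_notMem]
          intro a ha
          rw [Finset.mem_inter, hS'def, Finset.mem_image] at ha
          obtain ⟨⟨i, -, rfl⟩, h2⟩ := ha
          exact hpicknB i h2
        exact absurd (hkill S' hS'card B hB hS'B) (not_le.mpr hS'heavy)
      -- final counting
      have hsplit : G.card = (∑ S ∈ U.powerset \ HVY, (cls S).card)
          + ∑ S ∈ HVY, (cls S).card := by
        rw [Finset.sum_sdiff (by rw [hHVYdef]; exact Finset.filter_subset _ _)]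
        exact hGsum
      have hsum1 : ∑ S ∈ HVY, (cls S).card
          ≤ (P - 1) * (n - u).choose m := by
        refine le_trans (Finset.sum_le_card_nsmul _ _ ((n - u).choose m) ?_) ?_
        · intro S hS
          have hSd : S.card = d := (hHVYmem S hS).2.1
          have h1 := hclsb S
          have h2 : k - S.card = m := by omega
          rwa [h2] at h1
        · rw [smul_eq_mul]
          exact Nat.mul_le_mul_right _ hHVYlt
      have hsum2 : ∑ S ∈ U.powerset \ HVY, (cls S).card
          ≤ 2 ^ u * ((m + 1) * (n - u).choose (m - 1)) := by
        refine le_trans (Finset.sum_le_card_nsmul _ _ ((m + 1) * (n - u).choose (m - 1)) ?_) ?_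
        · intro S hS
          rw [Finset.mem_sdiff] at hS
          obtain ⟨hSp, hSmem⟩ := hS
          rw [hHVYdef, Finset.mem_filter] at hSmem
          have hSn : ¬ ((S.card = d ∧ ∀ i, ∃ a, S ∩ T i = {a}) ∧
              m * ((n - u).choose (m - 1)) < (cls S).card) := fun hp => hSmem ⟨hSp, hp⟩
          by_cases hrb : S.card = d ∧ ∀ i, ∃ a, S ∩ T i = {a}
          · have hnh : ¬ (m * ((n - u).choose (m - 1)) < (cls S).card) := by
              intro h
              exact hSn ⟨hrb, h⟩
            push_neg at hnh
            calc (cls S).card ≤ m * ((n - u).choose (m - 1)) := hnh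
            _ ≤ (m + 1) * (n - u).choose (m - 1) := Nat.mul_le_mul_right _ (by omega)
          · by_cases hne : (cls S).Nonempty
            · obtain ⟨A, hA⟩ := hne
              rw [hclsdef, Finset.mem_filter] at hA
              have hd1 : d + 1 ≤ S.card := by
                have h1 : d ≤ S.card := by
                  rw [← hA.2]
                  exact hdle A hA.1
                rcases Nat.eq_or_lt_of_le h1 with h | h
                · exfalso
                  apply hrb
                  refine ⟨h.symm, fun i => ?_⟩
                  obtain ⟨a, ha⟩ := hsingle A hA.1 (by rw [hA.2, ← h]) i
                  refine ⟨a, ?_⟩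
                  rw [← hA.2, hSTi, ha]
                · exact h
              have h2 := hclsb S
              have h3 : (n - u).choose (k - S.card) ≤ (n - u).choose (m - 1) := by
                apply choose_le_choose_right (by omega)
                omega
              calc (cls S).card ≤ (n - u).choose (m - 1) := le_trans h2 h3
              _ ≤ (m + 1) * (n - u).choose (m - 1) := Nat.le_mul_of_pos_left _ (by omega)
            · rw [Finset.not_nonempty_iff_eq_empty] at hne
              rw [hne]
              simp only [Finset.card_empty]
              exact Nat.zero_le _
        · rw [smul_eq_mul]
          apply Nat.mul_le_mul_right
          refine le_trans (Finset.card_le_card Finset.sdiff_subset) ?_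
          rw [Finset.card_powerset, hUcard]
      have hgrow : 2 ^ u * ((m + 1) * (n - u).choose (m - 1)) ≤ (n - u).choose m := by
        have hm1 : 1 ≤ m := by omega
        have hc1 := Nat.choose_succ_right_eq (n - u) (m - 1)
        have hmm : m - 1 + 1 = m := by omega
        rw [hmm] at hc1
        have hNbig : m * (2 ^ u * (m + 1)) ≤ (n - u) - (m - 1) := by omega
        have h5 : 2 ^ u * ((m + 1) * (n - u).choose (m - 1)) * m
            ≤ (n - u).choose (m - 1) * ((n - u) - (m - 1)) := by
          calc 2 ^ u * ((m + 1) * (n - u).choose (m - 1)) * m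
              = (n - u).choose (m - 1) * (m * (2 ^ u * (m + 1))) := by ring
          _ ≤ (n - u).choose (m - 1) * ((n - u) - (m - 1)) :=
            Nat.mul_le_mul_left _ hNbig
        rw [← hc1] at h5
        exact Nat.le_of_mul_le_mul_right h5 (by omega)
      calc G.card = _ := hsplit
      _ ≤ 2 ^ u * ((m + 1) * (n - u).choose (m - 1)) + (P - 1) * (n - u).choose m :=
        Nat.add_le_add hsum2 hsum1
      _ = (P - 1) * (n - u).choose m + 2 ^ u * ((m + 1) * (n - u).choose (m - 1)) := by
        ring
      _ ≤ (P - 1) * (n - u).choose m + (n - u).choose m := Nat.add_le_add_left hgrow _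
      _ = (P - 1 + 1) * (n - u).choose m := by ring
      _ = P * (n - u).choose m := by
        have h : P - 1 + 1 = P := by omega
        rw [h]
      _ ≤ (H.filter (fun A => y₀ ∈ A)).card := hstar
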